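/- Let L ≥ 2γ > 0 and let (t_i)_{i≥1} be a sequence of real numbers such that t_1 ≥ 4L/γ and t_{i+1} ≥ (L/γ)·(t_i − 4) for every i ≥ 1. Then for every n ≥ 1, the total ∑_{i=1}^n t_i ≥ (L/γ)^{n−1} · (t_1 − 4L/(L−γ)) and each t_i ≥ 0. -/
import Mathlib


/-- Quantitative conclusion of the main theorem in abstract form: from `t 1 ≥ 4L/γ` and the
recursion `t (i+1) ≥ (L/γ)(t i - 4)`, each `t i` is nonnegative and the total time to pass
`n` saddle points is at least `(L/γ)^(n-1) (t 1 - 4L/(L-γ))`. -/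
theorem total_escape_time_lower_bound
    (L γ : ℝ) (hγ : 0 < γ) (hL : 2 * γ ≤ L)
    (t : ℕ → ℝ)
    (ht1 : 4 * L / γ ≤ t 1)
    (hrec : ∀ i, 1 ≤ i → L / γ * (t i - 4) ≤ t (i + 1)) :
    (∀ i, 1 ≤ i → 0 ≤ t i) ∧
    ∀ n, 1 ≤ n →
      (L / γ) ^ (n - 1) * (t 1 - 4 * L / (L - γ)) ≤ ∑ i ∈ Finset.Icc 1 n, t i := by
  have hγL : γ < L := by linarith
  have hr2 : 2 ≤ L / γ := by rw [le_div_iff₀ hγ]; linarith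
  have hr0 : 0 < L / γ := by linarith
  have hd : (0:ℝ) < L - γ := by linarith
  have hLr : L / γ * γ = L := div_mul_cancel₀ L hγ.ne'
  have key : L / γ * (4 * L / (L - γ) - 4) = 4 * L / (L - γ) := by
    field_simp
    nlinarith [hLr]
  have hc0 : 0 < 4 * L / (L - γ) := div_pos (by linarith) hd
  have hcle : 4 * L / (L - γ) ≤ 4 * (L / γ) := by
    rw [div_le_iff₀ hd]
    nlinarith [hLr, mul_pos hγ (lt_of_lt_of_le two_pos hr2)]
  -- each t i ≥ 4 * (L/γ)
  have hA : ∀ i, 1 ≤ i → 4 * (L / γ) ≤ t i := by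
    intro i hi
    induction i, hi using Nat.le_induction with
    | base => calc 4 * (L / γ) = 4 * L / γ := by ring
                _ ≤ t 1 := ht1
    | succ n hn ih =>
      have h := hrec n hn
      nlinarith
  have hnn : ∀ i, 1 ≤ i → 0 ≤ t i := fun i hi => le_trans (by positivity) (hA i hi)
  refine ⟨hnn, ?_⟩
  -- t n ≥ (L/γ)^(n-1) * (t1 - c) + c
  have hB : ∀ n, 1 ≤ n →
      (L / γ) ^ (n - 1) * (t 1 - 4 * L / (L - γ)) + 4 * L / (L - γ) ≤ t n := by
    intro n hn
    induction n, hn using Nat.le_induction with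
    | base => simp
    | succ n hn ih =>
      have h := hrec n hn
      have hpow : (L / γ) ^ (n + 1 - 1) = L / γ * (L / γ) ^ (n - 1) := by
        obtain ⟨m, rfl⟩ := Nat.exists_eq_add_of_le hn
        simp [pow_succ]
        ring
      rw [hpow]
      nlinarith [sq_nonneg (L / γ), pow_nonneg (le_of_lt hr0) (n - 1)]
  intro n hn
  have hsum : t n ≤ ∑ i ∈ Finset.Icc 1 n, t i := by
    apply Finset.single_le_sum (f := t)
    · intro i hi
      exact hnn i (Finset.mem_Icc.mp hi).1
    · exact Finset.mem_Icc.mpr ⟨hn, le_refl n⟩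
  have := hB n hn
  linarith
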